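/- The 2-dimensional commutative algebra over a field K of characteristic ≠ 2 with basis {e_0, e_1}, products e_0² = e_0 + e_1, e_0e_1 = ½e_1, e_1² = 0, is a Lie triple algebra that is not a Jordan algebra, and it is dimensionally nilpotent via d(e_0) = e_1, d(e_1) = 0. -/

import Mathlib

/-- The 2-dimensional algebra with e_0² = e_0 + e_1, e_0e_1 = ½e_1, e_1² = 0 is a
Lie triple algebra which is not a Jordan algebra, and is dimensionally nilpotent
via d(e_0) = e_1, d(e_1) = 0. -/
theorem dim2_lie_triple_not_jordan {K A : Type*} [Field K]
    [NonUnitalNonAssocCommRing A] [Module K A] [SMulCommClass K A A] [IsScalarTower K A A]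
    (h2 : (2 : K) ≠ 0)
    (e : Module.Basis (Fin 2) K A)
    (h00 : e 0 * e 0 = e 0 + e 1)
    (h01 : e 0 * e 1 = (2 : K)⁻¹ • e 1)
    (h11 : e 1 * e 1 = 0) :
    (∀ x y : A, 2 • (x * (x * (x * y))) + y * (x * (x * x)) = 3 • (x * (y * (x * x)))) ∧
    ¬(∀ x y : A, (x * x) * (y * x) = ((x * x) * y) * x) ∧
    ∃ d : Module.End K A, (∀ x y : A, d (x * y) = d x * y + x * d y) ∧
      d (e 0) = e 1 ∧ d (e 1) = 0 ∧ d ^ 2 = 0 ∧ d ≠ 0 := by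
  have h10 : e 1 * e 0 = (2 : K)⁻¹ • e 1 := by rw [mul_comm, h01]
  have hmul : ∀ a b c d : K, (a • e 0 + b • e 1) * (c • e 0 + d • e 1) =
      (a * c) • e 0 + (a * c + (2 : K)⁻¹ * (a * d + b * c)) • e 1 := by
    intro a b c d
    rw [add_mul, mul_add, mul_add, smul_mul_smul_comm, smul_mul_smul_comm, smul_mul_smul_comm,
      smul_mul_smul_comm, h00, h01, h10, h11]
    match_scalars <;> ring
  have hs : ∀ x : A, x = e.repr x 0 • e 0 + e.repr x 1 • e 1 := by
    intro x
    have := e.sum_repr x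
    rw [Fin.sum_univ_two] at this
    exact this.symm
  have hcoef : ∀ a b c d : K, a • e 0 + b • e 1 = c • e 0 + d • e 1 → b = d := by
    intro a b c d h
    have := congrArg (fun z => e.repr z 1) h
    simpa using this
  refine ⟨?_, ?_, ?_⟩
  · intro x y
    obtain ⟨a, b, hx⟩ : ∃ a b : K, x = a • e 0 + b • e 1 := ⟨_, _, hs x⟩
    obtain ⟨c, d, hy⟩ : ∃ c d : K, y = c • e 0 + d • e 1 := ⟨_, _, hs y⟩
    subst hx hy
    simp only [hmul]
    rw [← Nat.cast_smul_eq_nsmul K, ← Nat.cast_smul_eq_nsmul K]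
    push_cast
    match_scalars <;> field_simp <;> ring
  · intro h
    have h1 := h (e 0) (e 0)
    have e0eq : (e 0 : A) = (1 : K) • e 0 + (0 : K) • e 1 := by simp
    rw [e0eq] at h1
    simp only [hmul] at h1
    have := hcoef _ _ _ _ h1
    field_simp at this
    exact absurd this (by intro hh; apply h2; linear_combination hh)
  · refine ⟨e.constr K ![e 1, 0], ?_, ?_, ?_, ?_, ?_⟩
    · have hd : ∀ a b : K, e.constr K ![e 1, 0] (a • e 0 + b • e 1) = a • e 1 := by
        intro a b
        simp [Module.Basis.constr_basis]
      intro x y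
      obtain ⟨a, b, hx⟩ : ∃ a b : K, x = a • e 0 + b • e 1 := ⟨_, _, hs x⟩
      obtain ⟨c, d, hy⟩ : ∃ c d : K, y = c • e 0 + d • e 1 := ⟨_, _, hs y⟩
      subst hx hy
      rw [hmul, hd, hd, hd]
      have re : ∀ a : K, a • (e 1 : A) = (0 : K) • e 0 + a • e 1 := by
        intro a; rw [zero_smul, zero_add]
      rw [re a, re c, hmul, hmul]
      match_scalars <;> field_simp <;> ring
    · simp [Module.Basis.constr_basis]
    · simp [Module.Basis.constr_basis]
    · apply Module.Basis.ext e
      intro i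
      fin_cases i <;>
        simp [pow_two, Module.End.mul_apply, Module.Basis.constr_basis]
    · intro h
      have : (e 1 : A) = 0 := by
        have := congrArg (fun f : Module.End K A => f (e 0)) h
        simpa [Module.Basis.constr_basis] using this
      exact e.ne_zero 1 this
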